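/- Almost-sure limit of the softmax tail mass under an i.i.d. Gaussian score model: let s_1, s_2, ... be i.i.d. random variables with s_i ~ N(μ, σ²), σ > 0, and fix t ∈ ℝ. Define τ_n(t) = ( Σ_{i=1}^{n} e^{s_i} 1_{s_i > t} ) / ( Σ_{i=1}^{n} e^{s_i} ). Then τ_n(t) converges almost surely, as n → ∞, to Φ_c( (t − μ − σ²)/σ ), where Φ_c(x) = 1 − Φ(x) is the standard normal survival function. -/

import Mathlib

open MeasureTheory ProbabilityTheory Filter
open scoped NNReal ENNReal

lemma aux_exp_mul_gaussianPDFReal (μ σ : ℝ) (hσ : 0 < σ) (x : ℝ) :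
    Real.exp x * gaussianPDFReal μ ⟨σ ^ 2, sq_nonneg σ⟩ x
      = Real.exp (μ + σ ^ 2 / 2) * gaussianPDFReal (μ + σ ^ 2) ⟨σ ^ 2, sq_nonneg σ⟩ x := by
  set w : ℝ≥0 := ⟨σ ^ 2, sq_nonneg σ⟩ with hw
  have hw' : (w : ℝ) = σ ^ 2 := rfl
  simp only [gaussianPDFReal, hw']
  rw [mul_left_comm, mul_left_comm (Real.exp (μ + σ ^ 2 / 2)), ← Real.exp_add, ← Real.exp_add]
  congr 2
  have hσ2 : σ ^ 2 ≠ 0 := pow_ne_zero 2 hσ.ne'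
  field_simp
  ring

lemma aux_integral_gaussianReal (μ : ℝ) {v : ℝ≥0} (hv : v ≠ 0) (g : ℝ → ℝ) :
    ∫ x, g x ∂(gaussianReal μ v) = ∫ x, g x * gaussianPDFReal μ v x := by
  rw [gaussianReal_of_var_ne_zero _ hv, gaussianPDF_def]
  rw [show (fun x => ENNReal.ofReal (gaussianPDFReal μ v x))
      = (fun x => ((gaussianPDFReal μ v x).toNNReal : ℝ≥0∞)) from rfl]
  rw [integral_withDensity_eq_integral_smul (measurable_gaussianPDFReal μ v).real_toNNReal]
  congr 1
  ext x
  simp [NNReal.smul_def, Real.coe_toNNReal _ (gaussianPDFReal_nonneg μ v x), mul_comm]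

lemma aux_integrable_gaussianReal (μ : ℝ) {v : ℝ≥0} (hv : v ≠ 0) {g : ℝ → ℝ}
    (h : Integrable (fun x => g x * gaussianPDFReal μ v x)) :
    Integrable g (gaussianReal μ v) := by
  rw [gaussianReal_of_var_ne_zero _ hv, gaussianPDF_def]
  rw [show (fun x => ENNReal.ofReal (gaussianPDFReal μ v x))
      = (fun x => ((gaussianPDFReal μ v x).toNNReal : ℝ≥0∞)) from rfl]
  rw [integrable_withDensity_iff_integrable_smul (measurable_gaussianPDFReal μ v).real_toNNReal]
  refine h.congr (Filter.Eventually.of_forall fun x => ?_)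
  simp [NNReal.smul_def, Real.coe_toNNReal _ (gaussianPDFReal_nonneg μ v x), mul_comm]

/-- **Almost-sure limit of the softmax tail mass under an i.i.d. Gaussian score
model.** Let `s 0, s 1, ...` be i.i.d. random variables with `s i ~ N(μ, σ²)`,
`σ > 0`, and fix `t ∈ ℝ`.  Define
`τ_n(t) = (∑_{i<n} e^{s i} 1_{s i > t}) / (∑_{i<n} e^{s i})`.  Then `τ_n(t)`
converges almost surely, as `n → ∞`, to `Φ_c((t−μ−σ²)/σ)`, where
`Φ_c(x) = 1 − Φ(x)` and `Φ` is the standard normal CDF (realized here as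
`Φ(x) = (N(0,1))(Iic x)`). -/
theorem softmax_tail_mass_tendsto_gaussian
    {Ω : Type*} [MeasureSpace Ω] [IsProbabilityMeasure (ℙ : Measure Ω)]
    (μ σ : ℝ) (hσ : 0 < σ) (t : ℝ)
    (s : ℕ → Ω → ℝ) (hmeas : ∀ i, Measurable (s i))
    (hindep : iIndepFun s ℙ)
    (hdist : ∀ i, Measure.map (s i) ℙ = gaussianReal μ ⟨σ ^ 2, sq_nonneg σ⟩) :
    ∀ᵐ ω ∂ℙ, Tendsto
      (fun n : ℕ =>
        (∑ i ∈ Finset.range n, if t < s i ω then Real.exp (s i ω) else 0) /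
          (∑ i ∈ Finset.range n, Real.exp (s i ω)))
      atTop
      (nhds (1 - ((gaussianReal 0 1) (Set.Iic ((t - μ - σ ^ 2) / σ))).toReal)) := by
  classical
  set v : ℝ≥0 := ⟨σ ^ 2, sq_nonneg σ⟩ with hv_def
  have hv : v ≠ 0 := by
    intro h
    have h2 : (v : ℝ) = 0 := by rw [h]; simp
    rw [hv_def] at h2
    exact hσ.ne' ((pow_eq_zero_iff (two_ne_zero)).mp h2)
  set E : ℝ := Real.exp (μ + σ ^ 2 / 2) with hE_def
  set f : ℝ → ℝ := fun x => if t < x then Real.exp x else 0 with hf_def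
  have hf : Measurable f := Measurable.ite measurableSet_Ioi Real.measurable_exp measurable_const
  have hmul : ∀ x, Real.exp x * gaussianPDFReal μ v x = E * gaussianPDFReal (μ + σ ^ 2) v x :=
    aux_exp_mul_gaussianPDFReal μ σ hσ
  -- integral of exp
  have hEy : ∫ x, Real.exp x ∂(gaussianReal μ v) = E := by
    rw [aux_integral_gaussianReal μ hv]
    simp_rw [hmul]
    rw [integral_const_mul, integral_gaussianPDFReal_eq_one _ hv, mul_one]
  have hIy' : Integrable (fun x => Real.exp x * gaussianPDFReal μ v x) := by
    simp_rw [hmul]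
    exact (integrable_gaussianPDFReal _ _).const_mul E
  have hIy : Integrable (fun x => Real.exp x) (gaussianReal μ v) :=
    aux_integrable_gaussianReal μ hv hIy'
  -- integral of f
  have hIf' : Integrable (fun x => f x * gaussianPDFReal μ v x) := by
    refine hIy'.mono' ((hf.mul (measurable_gaussianPDFReal μ v)).aestronglyMeasurable) ?_
    refine Filter.Eventually.of_forall fun x => ?_
    have hpdf := gaussianPDFReal_nonneg μ v x
    rw [Real.norm_eq_abs, abs_mul, abs_of_nonneg hpdf]
    have : |f x| ≤ Real.exp x := by
      by_cases hx : t < x <;> simp [hf_def, hx, abs_of_nonneg (Real.exp_pos x).le,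
        (Real.exp_pos x).le]
    exact mul_le_mul_of_nonneg_right this hpdf
  have hIf : Integrable f (gaussianReal μ v) := aux_integrable_gaussianReal μ hv hIf'
  have hEx : ∫ x, f x ∂(gaussianReal μ v)
      = E * ((gaussianReal (μ + σ ^ 2) v) (Set.Ioi t)).toReal := by
    rw [aux_integral_gaussianReal μ hv]
    have hind : ∀ x, f x * gaussianPDFReal μ v x
        = Set.indicator (Set.Ioi t) (fun x => E * gaussianPDFReal (μ + σ ^ 2) v x) x := by
      intro x
      by_cases hx : t < x
      · simp only [hf_def, hx, if_true, Set.indicator_of_mem (Set.mem_Ioi.mpr hx)]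
        exact hmul x
      · simp [hf_def, hx, Set.indicator_of_notMem (fun h => hx (Set.mem_Ioi.mp h))]
    simp_rw [hind]
    rw [integral_indicator measurableSet_Ioi, integral_const_mul]
    congr 1
    rw [gaussianReal_apply_eq_integral _ hv,
      ENNReal.toReal_ofReal
        (setIntegral_nonneg measurableSet_Ioi fun x _ => gaussianPDFReal_nonneg _ _ _)]
  -- tail probability identity
  have hν' : gaussianReal (μ + σ ^ 2) v
      = Measure.map (fun x => σ * x + (μ + σ ^ 2)) (gaussianReal 0 1) := by
    have h1 : (gaussianReal 0 1).map (σ * ·) = gaussianReal 0 v := by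
      rw [gaussianReal_map_const_mul σ]
      congr 1
      · ring
      · ext
        simp [hv_def]
        rfl
    have h2 : (gaussianReal 0 v).map (· + (μ + σ ^ 2)) = gaussianReal (μ + σ ^ 2) v := by
      rw [gaussianReal_map_add_const, zero_add]
    rw [← h2, ← h1, Measure.map_map (by fun_prop) (by fun_prop)]
    rfl
  have htail : ((gaussianReal (μ + σ ^ 2) v) (Set.Ioi t)).toReal
      = 1 - ((gaussianReal 0 1) (Set.Iic ((t - μ - σ ^ 2) / σ))).toReal := by
    rw [hν', Measure.map_apply ((measurable_const_mul σ).add_const _) measurableSet_Ioi]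
    have hpre : (fun x => σ * x + (μ + σ ^ 2)) ⁻¹' Set.Ioi t
        = Set.Ioi ((t - μ - σ ^ 2) / σ) := by
      ext x
      simp only [Set.mem_preimage, Set.mem_Ioi]
      rw [div_lt_iff₀ hσ]
      constructor <;> intro h <;> nlinarith
    rw [hpre, ← Set.compl_Iic, measure_compl measurableSet_Iic (measure_ne_top _ _), measure_univ,
      ENNReal.toReal_sub_of_le prob_le_one ENNReal.one_ne_top, ENNReal.toReal_one]
  -- random variables
  set X : ℕ → Ω → ℝ := fun i ω => f (s i ω) with hX_def
  set Y : ℕ → Ω → ℝ := fun i ω => Real.exp (s i ω) with hY_def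
  have hids : ∀ i, IdentDistrib (s i) (s 0) ℙ ℙ := fun i =>
    ⟨(hmeas i).aemeasurable, (hmeas 0).aemeasurable, by rw [hdist i, hdist 0]⟩
  have hindepX : Pairwise (Function.onFun (IndepFun · · ℙ) X) := fun i j hij =>
    (hindep.indepFun hij).comp hf hf
  have hindepY : Pairwise (Function.onFun (IndepFun · · ℙ) Y) := fun i j hij =>
    (hindep.indepFun hij).comp Real.measurable_exp Real.measurable_exp
  have hidX : ∀ i, IdentDistrib (X i) (X 0) ℙ ℙ := fun i => (hids i).comp hf
  have hidY : ∀ i, IdentDistrib (Y i) (Y 0) ℙ ℙ := fun i => (hids i).comp Real.measurable_exp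
  have hintX : Integrable (X 0) ℙ := by
    have := (integrable_map_measure hf.aestronglyMeasurable (hmeas 0).aemeasurable).mp
      (by rw [hdist 0]; exact hIf)
    exact this
  have hintY : Integrable (Y 0) ℙ := by
    have := (integrable_map_measure Real.continuous_exp.measurable.aestronglyMeasurable
      (hmeas 0).aemeasurable).mp (by rw [hdist 0]; exact hIy)
    exact this
  have hEX0 : ℙ[X 0] = E * ((gaussianReal (μ + σ ^ 2) v) (Set.Ioi t)).toReal := by
    have : ℙ[X 0] = ∫ x, f x ∂(Measure.map (s 0) ℙ) :=
      (integral_map (hmeas 0).aemeasurable hf.aestronglyMeasurable).symm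
    rw [this, hdist 0, hEx]
  have hEY0 : ℙ[Y 0] = E := by
    have : ℙ[Y 0] = ∫ x, Real.exp x ∂(Measure.map (s 0) ℙ) :=
      (integral_map (hmeas 0).aemeasurable
        Real.continuous_exp.measurable.aestronglyMeasurable).symm
    rw [this, hdist 0, hEy]
  have hA := strong_law_ae_real X hintX hindepX hidX
  have hB := strong_law_ae_real Y hintY hindepY hidY
  filter_upwards [hA, hB] with ω hAω hBω
  have hEpos : (0 : ℝ) < E := Real.exp_pos _
  have hne : ℙ[Y 0] ≠ 0 := by rw [hEY0]; exact hEpos.ne'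
  have key := hAω.div hBω hne
  have heq : ∀ᶠ n : ℕ in atTop,
      ((∑ i ∈ Finset.range n, X i ω) / n) / ((∑ i ∈ Finset.range n, Y i ω) / n)
        = (∑ i ∈ Finset.range n, X i ω) / (∑ i ∈ Finset.range n, Y i ω) := by
    filter_upwards [eventually_ge_atTop 1] with n hn
    have hn0 : (n : ℝ) ≠ 0 := Nat.cast_ne_zero.mpr (by omega)
    rcases eq_or_ne (∑ i ∈ Finset.range n, Y i ω) 0 with hb | hb
    · simp [hb]
    · field_simp
  have hfinal := key.congr' heq
  have hval : ℙ[X 0] / ℙ[Y 0]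
      = 1 - ((gaussianReal 0 1) (Set.Iic ((t - μ - σ ^ 2) / σ))).toReal := by
    rw [hEX0, hEY0, mul_comm, mul_div_assoc, div_self hEpos.ne', mul_one, htail]
  rw [hval] at hfinal
  exact hfinal
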